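/- The mixed Weyl relations hold: xᵢᴸ ∂ⱼᴿ − ∂ⱼᴿ xᵢᴸ = 0 for i ≠ j, and xᵢᴸ ∂ᵢᴿ − ∂ᵢᴿ xᵢᴸ = −[1/2]_q (q^{1/2} γᵢ + q^{−1/2} γᵢ⁻¹) ωᵢ, where ωᵢ = γ₁⁻¹⋯γ_{i−1}⁻¹ γ_{i+1}⋯γₙ and [1/2]_q = (q^{1/2} − q^{−1/2})/(q − q^{−1}). -/

import Mathlib

noncomputable section

/-- Multi-indices for `n` q-commuting variables. -/
abbrev QIdx (n : ℕ) := Fin n →₀ ℕ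

/-- A polynomial in the q-commutative algebra `A = ℂ⟨x₁,…,xₙ⟩/(xᵢxⱼ - q xⱼxᵢ, i<j)`,
represented by its coefficient function with respect to the ordered monomial basis
`x^α = x₁^{α₁}⋯xₙ^{αₙ}`. -/
abbrev QPoly (n : ℕ) := QIdx n → ℂ

/-- The symmetric q-number `[m]_q = (q^m - q^{-m})/(q - q⁻¹)` (as a complex scalar). -/
def qNum (q : ℝ) (m : ℤ) : ℂ := ((q : ℂ) ^ m - (q : ℂ) ^ (-m)) / ((q : ℂ) - (q : ℂ)⁻¹)

/-- `∑_{j<i} αⱼ`. -/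
def lowSum {n : ℕ} (i : Fin n) (α : QIdx n) : ℤ := ∑ j, if j < i then (α j : ℤ) else 0

/-- `∑_{j>i} αⱼ`. -/
def highSum {n : ℕ} (i : Fin n) (α : QIdx n) : ℤ := ∑ j, if i < j then (α j : ℤ) else 0

/-- `∑_j αⱼ`, the total degree. -/
def totSum {n : ℕ} (α : QIdx n) : ℤ := ∑ j, (α j : ℤ)

/-- The dilation operator `γᵢ : xᵢ ↦ q·xᵢ`; on monomials `γᵢ x^α = q^{αᵢ} x^α`. -/
def gam {n : ℕ} (q : ℝ) (i : Fin n) (f : QPoly n) : QPoly n :=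
  fun α => (q : ℂ) ^ (α i : ℤ) * f α

/-- The inverse dilation `γᵢ⁻¹`. -/
def gamInv {n : ℕ} (q : ℝ) (i : Fin n) (f : QPoly n) : QPoly n :=
  fun α => (q : ℂ) ^ (-(α i : ℤ)) * f α

/-- The total dilation `γ = γ₁⋯γₙ`. -/
def gamAll {n : ℕ} (q : ℝ) (f : QPoly n) : QPoly n :=
  fun α => (q : ℂ) ^ totSum α * f α

/-- The inverse total dilation `γ⁻¹`. -/
def gamAllInv {n : ℕ} (q : ℝ) (f : QPoly n) : QPoly n :=
  fun α => (q : ℂ) ^ (-totSum α) * f α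

/-- `ωᵢ = γ₁⁻¹⋯γ_{i-1}⁻¹ γ_{i+1}⋯γₙ`; on monomials it multiplies by
`q^{∑_{j>i} αⱼ - ∑_{j<i} αⱼ}`. -/
def omegaOp {n : ℕ} (q : ℝ) (i : Fin n) (f : QPoly n) : QPoly n :=
  fun α => (q : ℂ) ^ (highSum i α - lowSum i α) * f α

/-- `ωᵢ⁻¹ = γ₁⋯γ_{i-1} γ_{i+1}⁻¹⋯γₙ⁻¹`. -/
def omegaInvOp {n : ℕ} (q : ℝ) (i : Fin n) (f : QPoly n) : QPoly n :=
  fun α => (q : ℂ) ^ (lowSum i α - highSum i α) * f α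

/-- Left multiplication by `xᵢ`:  `xᵢ · x^β = q^{-∑_{j<i} βⱼ} x^{β+δᵢ}` in `A`. -/
def xL {n : ℕ} (q : ℝ) (i : Fin n) (f : QPoly n) : QPoly n :=
  fun α => if α i = 0 then 0 else
    (q : ℂ) ^ (-(lowSum i α)) * f (α - Finsupp.single i 1)

/-- Right multiplication by `xᵢ`:  `x^β · xᵢ = q^{-∑_{j>i} βⱼ} x^{β+δᵢ}` in `A`. -/
def xR {n : ℕ} (q : ℝ) (i : Fin n) (f : QPoly n) : QPoly n :=
  fun α => if α i = 0 then 0 else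
    (q : ℂ) ^ (-(highSum i α)) * f (α - Finsupp.single i 1)

/-- The left partial q-difference operator `∂ᵢᴸ = (xᵢᴸ)⁻¹(γᵢ - γᵢ⁻¹)/(q - q⁻¹)`;
on monomials `∂ᵢᴸ x^α = [αᵢ]_q q^{∑_{j<i} αⱼ} x^{α-δᵢ}`. -/
def dL {n : ℕ} (q : ℝ) (i : Fin n) (f : QPoly n) : QPoly n :=
  fun α => qNum q (α i + 1) * (q : ℂ) ^ lowSum i α * f (α + Finsupp.single i 1)

/-- The right partial q-difference operator `∂ᵢᴿ = (xᵢᴿ)⁻¹(γᵢ - γᵢ⁻¹)/(q - q⁻¹)`;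
on monomials `∂ᵢᴿ x^α = [αᵢ]_q q^{∑_{j>i} αⱼ} x^{α-δᵢ}`. -/
def dR {n : ℕ} (q : ℝ) (i : Fin n) (f : QPoly n) : QPoly n :=
  fun α => qNum q (α i + 1) * (q : ℂ) ^ highSum i α * f (α + Finsupp.single i 1)

/-- The q-power picked up when reordering `x^α · x^β = q^(qExp α β) x^{α+β}`,
namely `qExp α β = -∑_{i>j} αᵢ βⱼ`. -/
def qExp {n : ℕ} (α β : QIdx n) : ℤ :=
  -∑ i, ∑ j, if j < i then (α i : ℤ) * (β j : ℤ) else 0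

/-- Multiplication in the q-commutative algebra `A`, in coefficient form. -/
def qMul {n : ℕ} (q : ℝ) (f g : QPoly n) : QPoly n :=
  fun α => ∑ p ∈ Finset.HasAntidiagonal.antidiagonal α, (q : ℂ) ^ qExp p.1 p.2 * f p.1 * g p.2

/-- The unit of `A`. -/
def qOne {n : ℕ} : QPoly n := fun α => if α = 0 then 1 else 0

/-- Powers in `A`. -/
def qPow {n : ℕ} (q : ℝ) (f : QPoly n) : ℕ → QPoly n
  | 0 => qOne
  | m + 1 => qMul q f (qPow q f m)

/-- The monomial `x^α` as an element of `A`. -/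
def mono {n : ℕ} (α : QIdx n) : QPoly n := fun β => if β = α then 1 else 0

/-- The variable `xᵢ` as an element of `A`. -/
def Xvar {n : ℕ} (i : Fin n) : QPoly n := mono (Finsupp.single i 1)

/-- The Q-radius `Q = x₁² + q⁻¹ x₂² + … + q^{-n+1} xₙ²` as an element of `A`. -/
def Qradius {n : ℕ} (q : ℝ) : QPoly n :=
  ∑ i : Fin n, (q : ℂ) ^ (-((i : ℕ) : ℤ)) • qMul q (Xvar i) (Xvar i)

/-- The operator `Q̂ᴸ = ∑ᵢ q^{-i+1}(xᵢᴸ)²` of left multiplication by the Q-radius. -/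
def QhatL {n : ℕ} (q : ℝ) (f : QPoly n) : QPoly n :=
  ∑ i : Fin n, (q : ℂ) ^ (-((i : ℕ) : ℤ)) • xL q i (xL q i f)

/-- The `U_q(o)`-invariant q-Laplacian `Δ_qᴿ = ∑ᵢ q^{n-i}(∂ᵢᴿ)²`. -/
def qLap {n : ℕ} (q : ℝ) (f : QPoly n) : QPoly n :=
  ∑ i : Fin n, (q : ℂ) ^ ((n : ℤ) - 1 - ((i : ℕ) : ℤ)) • dR q i (dR q i f)


/-- `√q` as a complex scalar. -/
def sqC (q : ℝ) : ℂ := Complex.ofReal (Real.sqrt q)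

lemma single_sum {n : ℕ} (j : Fin n) (P : Fin n → Prop) [DecidablePred P] :
    (∑ k, if P k then ((Finsupp.single j 1 : QIdx n) k : ℤ) else 0) = if P j then 1 else 0 := by
  rw [Finset.sum_eq_single j]
  · simp [Finsupp.single_apply]
  · intro k _ hk
    simp [Finsupp.single_apply, (Ne.symm hk : j ≠ k)]
  · simp

lemma lowSum_add_single {n : ℕ} (i j : Fin n) (α : QIdx n) :
    lowSum i (α + Finsupp.single j 1) = lowSum i α + (if j < i then 1 else 0) := by
  unfold lowSum
  rw [← single_sum j (· < i), ← Finset.sum_add_distrib]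
  apply Finset.sum_congr rfl; intro k _
  by_cases h : k < i <;> simp [h, Finsupp.add_apply]

lemma highSum_add_single {n : ℕ} (i j : Fin n) (α : QIdx n) :
    highSum i (α + Finsupp.single j 1) = highSum i α + (if i < j then 1 else 0) := by
  unfold highSum
  rw [← single_sum j (i < ·), ← Finset.sum_add_distrib]
  apply Finset.sum_congr rfl; intro k _
  by_cases h : i < k <;> simp [h, Finsupp.add_apply]

lemma exists_sub {n : ℕ} (i : Fin n) (α : QIdx n) (h : α i ≠ 0) :
    ∃ β : QIdx n, α = β + Finsupp.single i 1 := by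
  refine ⟨α - Finsupp.single i 1, ?_⟩
  rw [tsub_add_cancel_of_le]
  exact Finsupp.single_le_iff.mpr (Nat.one_le_iff_ne_zero.mpr h)

lemma apply_add_single_ne {n : ℕ} (i j : Fin n) (α : QIdx n) (h : j ≠ i) :
    ((α + Finsupp.single j 1 : QIdx n)) i = α i := by
  simp [Finsupp.add_apply, Finsupp.single_apply, h]

lemma add_sub_single {n : ℕ} (i : Fin n) (β : QIdx n) :
    β + Finsupp.single i 1 - Finsupp.single i 1 = β := add_tsub_cancel_right _ _

lemma key_scalar (q : ℝ) (hq : 0 < q) (m : ℤ) :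
    qNum q m - qNum q (m + 1)
      = -(((sqC q - (sqC q)⁻¹) / ((q : ℂ) - (q : ℂ)⁻¹)) *
          (sqC q * (q : ℂ) ^ m + (sqC q)⁻¹ * (q : ℂ) ^ (-m))) := by
  have hq0 : (q : ℂ) ≠ 0 := by exact_mod_cast hq.ne'
  have hs : sqC q ≠ 0 := by
    simp [sqC, Complex.ofReal_ne_zero, (Real.sqrt_pos.mpr hq).ne']
  have hsq : sqC q * sqC q = (q : ℂ) := by
    rw [sqC, ← Complex.ofReal_mul, Real.mul_self_sqrt hq.le]
  unfold qNum
  rw [div_sub_div_same, div_mul_eq_mul_div, ← neg_div]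
  congr 1
  have hinv : sqC q * (sqC q)⁻¹ = 1 := mul_inv_cancel₀ hs
  rw [zpow_add_one₀ hq0, show (-(m + 1) : ℤ) = -m + -1 by ring, zpow_add₀ hq0,
    zpow_neg_one, ← hsq]
  field_simp
  linear_combination (sqC q * ((sqC q * sqC q) ^ m)⁻¹ * (sqC q)⁻¹ +
    ((sqC q * sqC q) ^ m)⁻¹ * (sqC q + (sqC q)⁻¹ - sqC q * (sqC q)⁻¹) -
    (((sqC q * sqC q) ^ m)⁻¹ * (sqC q)⁻¹ + sqC q * ((sqC q * sqC q) ^ m)⁻¹)) * hinv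

/-- Mixed Weyl relations:
`xᵢᴸ ∂ⱼᴿ - ∂ⱼᴿ xᵢᴸ = 0` for `i ≠ j` and
`xᵢᴸ ∂ᵢᴿ - ∂ᵢᴿ xᵢᴸ = -[1/2]_q (q^{1/2} γᵢ + q^{-1/2} γᵢ⁻¹) ωᵢ`. -/
theorem mixed_weyl_relations (n : ℕ) (q : ℝ) (hq : 0 < q) (hq1 : q ≠ 1)
    (i j : Fin n) (hij : i ≠ j) :
    (∀ f : QPoly n, xL q i (dR q j f) - dR q j (xL q i f) = 0) ∧
    (∀ f : QPoly n, xL q i (dR q i f) - dR q i (xL q i f)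
        = -(((sqC q - (sqC q)⁻¹) / ((q : ℂ) - (q : ℂ)⁻¹)) •
            (sqC q • gam q i (omegaOp q i f) + (sqC q)⁻¹ • gamInv q i (omegaOp q i f)))) := by
  have hq0 : (q : ℂ) ≠ 0 := by exact_mod_cast hq.ne'
  constructor
  · intro f; funext α
    simp only [Pi.sub_apply, Pi.zero_apply]
    by_cases h : α i = 0
    · have h2 : ((α + Finsupp.single j 1 : QIdx n)) i = 0 := by
        rw [apply_add_single_ne i j α (Ne.symm hij)]; exact h
      simp [xL, dR, h, h2]
    · obtain ⟨β, rfl⟩ := exists_sub i α h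
      have hb1 : ((β + Finsupp.single i 1 : QIdx n)) i ≠ 0 := by
        simp [Finsupp.add_apply, Finsupp.single_apply]
      have hb2 : ((β + Finsupp.single i 1 + Finsupp.single j 1 : QIdx n)) i ≠ 0 := by
        rw [apply_add_single_ne i j _ (Ne.symm hij)]; exact hb1
      have hc : β + Finsupp.single i 1 + Finsupp.single j 1 - Finsupp.single i 1
          = β + Finsupp.single j 1 := by
        rw [add_right_comm]; exact add_sub_single i _
      simp only [xL, dR, if_neg hb1, if_neg hb2, add_sub_single, hc]
      rw [apply_add_single_ne j i β hij]
      rw [show lowSum i (β + Finsupp.single i 1) = lowSum i β from by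
            rw [lowSum_add_single]; simp,
          highSum_add_single j i,
          show lowSum i (β + Finsupp.single i 1 + Finsupp.single j 1)
              = lowSum i β + (if j < i then 1 else 0) from by
            rw [lowSum_add_single, lowSum_add_single]; simp]
      have hcc : (q : ℂ) ^ (if j < i then (1 : ℤ) else 0)
          * (q : ℂ) ^ (-(if j < i then (1 : ℤ) else 0)) = 1 := by
        rw [← zpow_add₀ hq0]; simp
      rw [zpow_add₀ hq0 (highSum j β),
          show -(lowSum i β + (if j < i then (1 : ℤ) else 0))
              = -lowSum i β + -(if j < i then (1 : ℤ) else 0) from by ring,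
          zpow_add₀ hq0]
      linear_combination (-(qNum q (↑(β j) + 1) * (q : ℂ) ^ highSum j β
        * (q : ℂ) ^ (-lowSum i β) * f (β + Finsupp.single j 1))) * hcc
  · intro f; funext α
    have hterm1 : xL q i (dR q i f) α
        = qNum q (α i) * ((q : ℂ) ^ highSum i α * ((q : ℂ) ^ (-lowSum i α) * f α)) := by
      by_cases h : α i = 0
      · simp [xL, h, qNum]
      · obtain ⟨β, rfl⟩ := exists_sub i α h
        have hb1 : ((β + Finsupp.single i 1 : QIdx n)) i ≠ 0 := by
          simp [Finsupp.add_apply, Finsupp.single_apply]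
        simp only [xL, dR, if_neg hb1, add_sub_single]
        rw [show ((β + Finsupp.single i 1 : QIdx n)) i = β i + 1 from by
              simp [Finsupp.add_apply, Finsupp.single_apply],
            show highSum i (β + Finsupp.single i 1) = highSum i β from by
              rw [highSum_add_single]; simp]
        push_cast
        ring
    have hterm2 : dR q i (xL q i f) α
        = qNum q ((α i : ℤ) + 1)
          * ((q : ℂ) ^ highSum i α * ((q : ℂ) ^ (-lowSum i α) * f α)) := by
      have hne : ((α + Finsupp.single i 1 : QIdx n)) i ≠ 0 := by
        simp [Finsupp.add_apply, Finsupp.single_apply]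
      simp only [dR, xL, if_neg hne, add_sub_single]
      rw [show lowSum i (α + Finsupp.single i 1) = lowSum i α from by
            rw [lowSum_add_single]; simp]
      ring
    simp only [Pi.sub_apply, Pi.neg_apply, Pi.smul_apply, Pi.add_apply, smul_eq_mul,
      gam, gamInv, omegaOp]
    rw [hterm1, hterm2,
        show (q : ℂ) ^ (highSum i α - lowSum i α)
            = (q : ℂ) ^ highSum i α * (q : ℂ) ^ (-lowSum i α) from by
          rw [← zpow_add₀ hq0, sub_eq_add_neg]]
    have key := key_scalar q hq (α i : ℤ)
    linear_combination ((q : ℂ) ^ highSum i α * (q : ℂ) ^ (-lowSum i α) * f α) * key
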